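/- Dual Cauchy identity in determinant form: let M ≥ N ≥ 1, let z₁,…,z_N ∈ ℂ be pairwise distinct, y₁,…,y_N ∈ ℂ be pairwise distinct, and z_j ≠ y_k for all j,k. Then ∑_λ s_λ(z₁,…,z_N) · s_{λ∨}(y₁,…,y_N) = ∏_{1≤j<k≤N} 1/((z_k−z_j)(y_j−y_k)) · det( (z_j^M − y_k^M)/(z_j − y_k) )_{1≤j,k≤N}, where the sum runs over all partitions λ = (λ₁ ≥ ⋯ ≥ λ_N ≥ 0) with λ₁ ≤ M−N, and λ∨ denotes the partition λ∨_j = M − N − λ_{N+1−j}. -/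

import Mathlib

noncomputable section

/-- The Schur polynomial s_λ(z₁,…,z_N) = det(z_j^{λ_k+N−k}) / ∏_{j<k}(z_j−z_k). -/
def schur (N : ℕ) (lam : Fin N → ℕ) (z : Fin N → ℂ) : ℂ :=
  (Matrix.of fun j k : Fin N => z j ^ (lam k + (N - 1 - (k : ℕ)))).det /
    ∏ j : Fin N, ∏ k ∈ Finset.Ioi j, (z j - z k)

open Finset

-- gap lemma
lemma dc_gap {n m : ℕ} {g : Fin n → Fin m} (hg : StrictMono g) {j k : Fin n} (h : j ≤ k) :
    (g j : ℕ) + ((k : ℕ) - (j : ℕ)) ≤ (g k : ℕ) := by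
  obtain ⟨d, hd⟩ : ∃ d, (k : ℕ) = (j : ℕ) + d := ⟨(k : ℕ) - (j : ℕ), by
    have := (Fin.le_def).1 h; omega⟩
  induction d generalizing k with
  | zero => have : j = k := Fin.ext (by omega); subst this; simp
  | succ d ih =>
      have hk' : (j : ℕ) + d < n := by have := k.isLt; omega
      have h1 := ih (k := ⟨(j : ℕ) + d, hk'⟩) (by rw [Fin.le_def]; simp) rfl
      have h2 : g ⟨(j : ℕ) + d, hk'⟩ < g k := hg (by rw [Fin.lt_def]; simp; omega)
      have h3 := (Fin.lt_def).1 h2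
      simp only [Fin.val_mk] at h1 h3
      omega

-- reindexing products over pairs by rev
lemma dc_prod_Ioi_rev {n : ℕ} (f : Fin n → Fin n → ℂ) :
    (∏ i : Fin n, ∏ j ∈ Ioi i, f (Fin.rev i) (Fin.rev j)) =
      ∏ i : Fin n, ∏ j ∈ Ioi i, f j i := by
  rw [Finset.prod_sigma', Finset.prod_sigma']
  refine Finset.prod_nbij' (fun p => ⟨Fin.rev p.2, Fin.rev p.1⟩)
    (fun p => ⟨Fin.rev p.2, Fin.rev p.1⟩) ?_ ?_ ?_ ?_ ?_
  · rintro ⟨i, j⟩ hp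
    simp only [mem_sigma, mem_univ, mem_Ioi, true_and] at *
    exact Fin.rev_lt_rev.2 hp
  · rintro ⟨i, j⟩ hp
    simp only [mem_sigma, mem_univ, mem_Ioi, true_and] at *
    exact Fin.rev_lt_rev.2 hp
  · rintro ⟨i, j⟩ _; simp
  · rintro ⟨i, j⟩ _; simp
  · rintro ⟨i, j⟩ _; simp
-- sign of reversal times reversed Vandermonde product
lemma dc_sign_rev {n : ℕ} (w : Fin n → ℂ) :
    ((Equiv.Perm.sign (Fin.revPerm : Equiv.Perm (Fin n)) : ℤ) : ℂ) *
        ∏ i : Fin n, ∏ j ∈ Ioi i, (w j - w i) =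
      ∏ i : Fin n, ∏ j ∈ Ioi i, (w i - w j) := by
  have h1 := Matrix.det_permute (Fin.revPerm : Equiv.Perm (Fin n)) (Matrix.vandermonde w)
  have h2 : (Matrix.vandermonde w).submatrix (Fin.revPerm : Equiv.Perm (Fin n)) id =
      Matrix.vandermonde (w ∘ Fin.rev) := by
    ext i j; simp [Matrix.vandermonde, Matrix.submatrix]
  rw [h2, Matrix.det_vandermonde, Matrix.det_vandermonde] at h1
  have h3 := dc_prod_Ioi_rev (fun a b => w b - w a)
  simp only [Function.comp] at h1
  rw [h3] at h1
  rw [← h1]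

-- multilinear expansion of determinant with summed rows
lemma dc_det_expand (nn mm : ℕ) (A : Fin nn → Fin mm → ℂ) (w : Fin mm → Fin nn → ℂ) :
    (Matrix.of fun j k : Fin nn => ∑ m : Fin mm, A j m * w m k).det
      = ∑ r : Fin nn → Fin mm,
          (∏ j, A j (r j)) * (Matrix.of fun j k : Fin nn => w (r j) k).det := by
  have hrow : (Matrix.of fun j k : Fin nn => ∑ m : Fin mm, A j m * w m k) =
      fun j => ∑ m : Fin mm, A j m • w m := by
    funext j k
    simp [Finset.sum_apply]
  rw [Matrix.det, hrow]
  rw [show ((Matrix.detRowAlternating : (Fin nn → ℂ) [⋀^Fin nn]→ₗ[ℂ] ℂ) :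
        (Fin nn → (Fin nn → ℂ)) → ℂ) (fun j => ∑ m : Fin mm, A j m • w m)
      = (Matrix.detRowAlternating : (Fin nn → ℂ) [⋀^Fin nn]→ₗ[ℂ] ℂ).toMultilinearMap
          (fun j => ∑ m : Fin mm, A j m • w m) from rfl]
  rw [MultilinearMap.map_sum]
  refine Finset.sum_congr rfl fun r _ => ?_
  have := (Matrix.detRowAlternating : (Fin nn → ℂ) [⋀^Fin nn]→ₗ[ℂ] ℂ).toMultilinearMap.map_smul_univ
    (fun j => A j (r j)) (fun j => w (r j))
  rw [this, smul_eq_mul]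
  rfl
lemma dc_main (M N : ℕ) (hN : 1 ≤ N) (hMN : N ≤ M) (z y : Fin N → ℂ) :
    (Matrix.of fun j k : Fin N => ∑ m : Fin M, z j ^ (m : ℕ) * y k ^ (M - 1 - (m : ℕ))).det
      = ((Equiv.Perm.sign (Fin.revPerm : Equiv.Perm (Fin N)) : ℤ) : ℂ) *
        ∑ l : Fin N → Fin (M - N + 1),
          if (∀ j k : Fin N, j ≤ k → (l k : ℕ) ≤ (l j : ℕ)) then
            (Matrix.of fun j k : Fin N => z j ^ ((l k : ℕ) + (N - 1 - (k : ℕ)))).det *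
              (Matrix.of fun j k : Fin N =>
                y j ^ ((M - N - (l (Fin.rev k) : ℕ)) + (N - 1 - (k : ℕ)))).det
          else 0 := by
  have hsign2 : ((Equiv.Perm.sign (Fin.revPerm : Equiv.Perm (Fin N)) : ℤ) : ℂ) *
      ((Equiv.Perm.sign (Fin.revPerm : Equiv.Perm (Fin N)) : ℤ) : ℂ) = 1 := by
    rw [← Int.cast_mul, ← Units.val_mul, Int.units_mul_self]
    norm_num
  have haux : ∀ (l : Fin N → Fin (M - N + 1)) (k : Fin N),
      (l k : ℕ) + (N - 1 - (k : ℕ)) < M := by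
    intro l k; have h1 := (l k).isLt; have h2 := k.isLt; omega
  set aF : (Fin N → Fin (M - N + 1)) → Fin N → Fin M :=
    fun l k => ⟨(l k : ℕ) + (N - 1 - (k : ℕ)), haux l k⟩ with haFdef
  have haF : ∀ l k, (aF l k : ℕ) = (l k : ℕ) + (N - 1 - (k : ℕ)) := fun l k => rfl
  have hanti : ∀ l, (∀ j k : Fin N, j ≤ k → (l k : ℕ) ≤ (l j : ℕ)) → StrictAnti (aF l) := by
    intro l hl j k hjk
    have h0 := hl j k hjk.le
    rw [Fin.lt_def] at hjk ⊢
    have h1 := k.isLt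
    simp only [haF]
    omega
  rw [dc_det_expand N M (fun j m => z j ^ (m : ℕ)) (fun m k => y k ^ (M - 1 - (m : ℕ)))]
  have hfilter : ∀ r : Fin N → Fin M, r ∈ Finset.univ →
      ((∏ j, z j ^ (r j : ℕ)) *
        (Matrix.of fun j k : Fin N => y k ^ (M - 1 - (r j : ℕ))).det) ≠ 0 →
      Function.Injective r := by
    intro r _ hne
    by_contra hinj
    apply hne
    rw [Function.not_injective_iff] at hinj
    obtain ⟨i, j, hij, hne'⟩ := hinj
    have hdet : (Matrix.of fun j k : Fin N => y k ^ (M - 1 - (r j : ℕ))).det = 0 :=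
      Matrix.det_zero_of_row_eq hne' (by funext k; simp only [Matrix.of_apply]; rw [hij])
    rw [hdet, mul_zero]
  rw [← Finset.sum_filter_of_ne hfilter]
  -- the bijection
  have key : (∑ p ∈ (Finset.univ.filter
        (fun l : Fin N → Fin (M - N + 1) => ∀ j k : Fin N, j ≤ k → (l k : ℕ) ≤ (l j : ℕ)))
          ×ˢ (Finset.univ : Finset (Equiv.Perm (Fin N))),
        (∏ j, z j ^ (aF p.1 (p.2 j) : ℕ)) *
          (Matrix.of fun j k : Fin N => y k ^ (M - 1 - (aF p.1 (p.2 j) : ℕ))).det)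
      = ∑ r ∈ Finset.univ.filter (fun r : Fin N → Fin M => Function.Injective r),
          (∏ j, z j ^ (r j : ℕ)) *
            (Matrix.of fun j k : Fin N => y k ^ (M - 1 - (r j : ℕ))).det := by
    refine Finset.sum_bij (fun p _ => fun j => aF p.1 (p.2 j)) ?_ ?_ ?_ ?_
    · rintro ⟨l, σ⟩ hp
      simp only [Finset.mem_filter, Finset.mem_univ, true_and, Finset.mem_product] at hp ⊢
      exact ((hanti l hp.1).injective).comp σ.injective
    · rintro ⟨l₁, σ₁⟩ hp₁ ⟨l₂, σ₂⟩ hp₂ heq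
      simp only [Finset.mem_product, Finset.mem_filter, Finset.mem_univ, true_and] at hp₁ hp₂
      have h1 : aF l₁ ∘ ⇑σ₁ = aF l₂ ∘ ⇑σ₂ := funext fun j => congrFun heq j
      have hrange : Set.range (aF l₁) = Set.range (aF l₂) := by
        rw [← σ₁.surjective.range_comp (aF l₁), ← σ₂.surjective.range_comp (aF l₂)]
        exact congrArg _ h1
      have h2 : aF l₁ = aF l₂ :=
        Set.range_injOn_strictAnti (hanti l₁ hp₁.1) (hanti l₂ hp₂.1) hrange
      have h3 : l₁ = l₂ := by
        funext k
        have := congrArg (fun f => (f k : ℕ)) h2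
        simp only [haF] at this
        exact Fin.ext (by omega)
      subst h3
      have h4 : σ₁ = σ₂ := by
        ext j
        have := congrFun h1 j
        exact congrArg Fin.val ((hanti l₁ hp₁.1).injective this)
      simp [h4]
    · intro r hr
      simp only [Finset.mem_filter, Finset.mem_univ, true_and] at hr
      have hg : StrictMono (r ∘ ⇑(Tuple.sort r)) :=
        (Tuple.monotone_sort r).strictMono_of_injective (hr.comp (Tuple.sort r).injective)
      set g := r ∘ ⇑(Tuple.sort r) with hgdef
      have hlast : (N : ℕ) - 1 < N := by omega
      have hub : ∀ k : Fin N, (g k : ℕ) + ((N : ℕ) - 1 - (k : ℕ)) ≤ M - 1 := by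
        intro k
        have h1 := dc_gap hg (j := k) (k := ⟨N - 1, hlast⟩) (by rw [Fin.le_def]; simp; omega)
        have h2 := (g ⟨N - 1, hlast⟩).isLt
        simp only [Fin.val_mk] at h1
        omega
      have hlb : ∀ k : Fin N, (k : ℕ) ≤ (g k : ℕ) := by
        intro k
        have h1 := dc_gap hg (j := ⟨0, by omega⟩) (k := k) (by rw [Fin.le_def]; simp)
        simp only [Fin.val_mk] at h1
        omega
      have hbound : ∀ k : Fin N, (g (Fin.rev k) : ℕ) - ((N : ℕ) - 1 - (k : ℕ)) < M - N + 1 := by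
        intro k
        have h1 := hub (Fin.rev k)
        have h2 := hlb (Fin.rev k)
        have h3 : ((Fin.rev k) : ℕ) = N - 1 - (k : ℕ) := by rw [Fin.val_rev]; omega
        have h4 := k.isLt
        omega
      refine ⟨(fun k => ⟨(g (Fin.rev k) : ℕ) - ((N : ℕ) - 1 - (k : ℕ)), hbound k⟩,
        (Tuple.sort r)⁻¹.trans Fin.revPerm), ?_, ?_⟩
      · refine Finset.mem_product.2 ⟨Finset.mem_filter.2 ⟨Finset.mem_univ _, ?_⟩, Finset.mem_univ _⟩
        intro j k hjk
        simp only [Fin.val_mk]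
        have h1 := dc_gap hg (j := Fin.rev k) (k := Fin.rev j) (Fin.rev_le_rev.2 hjk)
        have h2 := hlb (Fin.rev k)
        have h3 : ((Fin.rev k) : ℕ) = N - 1 - (k : ℕ) := by rw [Fin.val_rev]; omega
        have h4 : ((Fin.rev j) : ℕ) = N - 1 - (j : ℕ) := by rw [Fin.val_rev]; omega
        have h5 := k.isLt
        have h6 := j.isLt
        have h7 := Fin.le_def.1 hjk
        omega
      · funext j
        apply Fin.ext
        rw [haF]
        have h2 := hlb ((Tuple.sort r)⁻¹ j)
        have h4 : (g ((Tuple.sort r)⁻¹ j) : ℕ) = (r j : ℕ) := by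
          rw [hgdef]
          simp only [Function.comp_apply]
          rw [Equiv.Perm.coe_inv, Equiv.apply_symm_apply]
        simp only [Equiv.trans_apply, Fin.revPerm_apply, Fin.rev_rev, Fin.val_mk]
        have h3 : ((Fin.rev ((Tuple.sort r)⁻¹ j)) : ℕ) = N - 1 - (((Tuple.sort r)⁻¹ j) : ℕ) := by
          rw [Fin.val_rev]; omega
        omega
    · rintro ⟨l, σ⟩ hp
      rfl
  rw [← key, Finset.sum_product]
  have perl : ∀ l ∈ Finset.univ.filter
      (fun l : Fin N → Fin (M - N + 1) => ∀ j k : Fin N, j ≤ k → (l k : ℕ) ≤ (l j : ℕ)),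
      (∑ σ : Equiv.Perm (Fin N), (∏ j, z j ^ (aF l (σ j) : ℕ)) *
          (Matrix.of fun j k : Fin N => y k ^ (M - 1 - (aF l (σ j) : ℕ))).det)
        = ((Equiv.Perm.sign (Fin.revPerm : Equiv.Perm (Fin N)) : ℤ) : ℂ) *
          ((Matrix.of fun j k : Fin N => z j ^ ((l k : ℕ) + (N - 1 - (k : ℕ)))).det *
            (Matrix.of fun j k : Fin N =>
              y j ^ ((M - N - (l (Fin.rev k) : ℕ)) + (N - 1 - (k : ℕ)))).det) := by
    intro l hl
    simp only [Finset.mem_filter, Finset.mem_univ, true_and] at hl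
    have hsub : ∀ σ : Equiv.Perm (Fin N),
        (Matrix.of fun j k : Fin N => y k ^ (M - 1 - (aF l (σ j) : ℕ)))
          = (Matrix.of fun j k : Fin N => y k ^ (M - 1 - (aF l j : ℕ))).submatrix σ id :=
      fun σ => rfl
    have step1 : ∀ σ : Equiv.Perm (Fin N),
        (∏ j, z j ^ (aF l (σ j) : ℕ)) *
            (Matrix.of fun j k : Fin N => y k ^ (M - 1 - (aF l (σ j) : ℕ))).det
          = (((Equiv.Perm.sign σ : ℤ) : ℂ) * ∏ j, z j ^ (aF l (σ j) : ℕ)) *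
              (Matrix.of fun j k : Fin N => y k ^ (M - 1 - (aF l j : ℕ))).det := by
      intro σ
      rw [hsub σ, Matrix.det_permute]
      ring
    rw [Finset.sum_congr rfl (fun σ _ => step1 σ), ← Finset.sum_mul]
    have hAz : (∑ σ : Equiv.Perm (Fin N),
          ((Equiv.Perm.sign σ : ℤ) : ℂ) * ∏ j, z j ^ (aF l (σ j) : ℕ))
        = (Matrix.of fun j k : Fin N => z j ^ ((l k : ℕ) + (N - 1 - (k : ℕ)))).det := by
      rw [← Matrix.det_transpose, Matrix.det_apply']
      rfl
    rw [hAz]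
    have hAy : (Matrix.of fun j k : Fin N =>
          y j ^ ((M - N - (l (Fin.rev k) : ℕ)) + (N - 1 - (k : ℕ)))).det
        = ((Equiv.Perm.sign (Fin.revPerm : Equiv.Perm (Fin N)) : ℤ) : ℂ) *
          (Matrix.of fun j k : Fin N => y k ^ (M - 1 - (aF l j : ℕ))).det := by
      have h1 : (Matrix.of fun j k : Fin N =>
            y j ^ ((M - N - (l (Fin.rev k) : ℕ)) + (N - 1 - (k : ℕ))))
          = (Matrix.transpose (Matrix.of fun j k : Fin N => y k ^ (M - 1 - (aF l j : ℕ)))).submatrix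
              id ⇑(Fin.revPerm : Equiv.Perm (Fin N)) := by
        ext j k
        simp only [Matrix.of_apply, Matrix.submatrix_apply, Matrix.transpose_apply, id_eq,
          Fin.revPerm_apply, haF]
        congr 1
        have h2 := (l (Fin.rev k)).isLt
        have h3 := k.isLt
        have h4 : ((Fin.rev k) : ℕ) = N - 1 - (k : ℕ) := by rw [Fin.val_rev]; omega
        omega
      rw [h1, Matrix.det_permute', Matrix.det_transpose]
    set dAz := (Matrix.of fun j k : Fin N => z j ^ ((l k : ℕ) + (N - 1 - (k : ℕ)))).det
    set dR := (Matrix.of fun j k : Fin N => y k ^ (M - 1 - (aF l j : ℕ))).det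
    set dAy := (Matrix.of fun j k : Fin N =>
      y j ^ ((M - N - (l (Fin.rev k) : ℕ)) + (N - 1 - (k : ℕ)))).det
    rw [hAy]
    linear_combination (-(dAz * dR)) * hsign2
  rw [Finset.sum_congr rfl perl, ← Finset.mul_sum, Finset.sum_filter]

open Classical in
/-- Dual Cauchy identity in determinant form: the sum over all partitions
λ ⊆ (M−N)^N (encoded by weakly decreasing functions Fin N → Fin (M−N+1)) of
s_λ(z)·s_{λ∨}(y), where λ∨_j = M−N−λ_{N+1−j}, equals the stated determinant. -/
theorem dual_cauchy_identity (M N : ℕ) (hN : 1 ≤ N) (hMN : N ≤ M)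
    (z : Fin N → ℂ) (hz : Function.Injective z)
    (y : Fin N → ℂ) (hy : Function.Injective y)
    (hzy : ∀ j k, z j ≠ y k) :
    (∑ l : Fin N → Fin (M - N + 1),
        if (∀ j k : Fin N, j ≤ k → (l k : ℕ) ≤ (l j : ℕ)) then
          schur N (fun j => (l j : ℕ)) z *
            schur N (fun j => M - N - (l (Fin.rev j) : ℕ)) y
        else 0) =
      (∏ j : Fin N, ∏ k ∈ Finset.Ioi j, ((z k - z j) * (y j - y k))⁻¹) *
        (Matrix.of fun j k : Fin N => ((z j) ^ M - (y k) ^ M) / (z j - y k)).det := by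
  have hsign2 : ((Equiv.Perm.sign (Fin.revPerm : Equiv.Perm (Fin N)) : ℤ) : ℂ) *
      ((Equiv.Perm.sign (Fin.revPerm : Equiv.Perm (Fin N)) : ℤ) : ℂ) = 1 := by
    rw [← Int.cast_mul, ← Units.val_mul, Int.units_mul_self]
    norm_num
  have hVz : (∏ j : Fin N, ∏ k ∈ Finset.Ioi j, (z j - z k)) ≠ 0 := by
    rw [Finset.prod_ne_zero_iff]
    intro j _
    rw [Finset.prod_ne_zero_iff]
    intro k hk
    exact sub_ne_zero.2 fun h => (Finset.mem_Ioi.1 hk).ne' (hz h.symm)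
  have hVy : (∏ j : Fin N, ∏ k ∈ Finset.Ioi j, (y j - y k)) ≠ 0 := by
    rw [Finset.prod_ne_zero_iff]
    intro j _
    rw [Finset.prod_ne_zero_iff]
    intro k hk
    exact sub_ne_zero.2 fun h => (Finset.mem_Ioi.1 hk).ne' (hy h.symm)
  have hPz : (∏ j : Fin N, ∏ k ∈ Finset.Ioi j, (z k - z j)) ≠ 0 := by
    rw [Finset.prod_ne_zero_iff]
    intro j _
    rw [Finset.prod_ne_zero_iff]
    intro k hk
    exact sub_ne_zero.2 fun h => (Finset.mem_Ioi.1 hk).ne (hz h.symm)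
  have hC : (Matrix.of fun j k : Fin N => ((z j) ^ M - (y k) ^ M) / (z j - y k))
      = Matrix.of fun j k : Fin N => ∑ m : Fin M, z j ^ (m : ℕ) * y k ^ (M - 1 - (m : ℕ)) := by
    ext j k
    simp only [Matrix.of_apply]
    rw [eq_comm, Fin.sum_univ_eq_sum_range (fun m => z j ^ m * y k ^ (M - 1 - m)) M,
      eq_div_iff (sub_ne_zero.2 (hzy j k))]
    exact geom_sum₂_mul (z j) (y k) M
  rw [hC, dc_main M N hN hMN z y]
  have hsplit : ∀ l : Fin N → Fin (M - N + 1),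
      (if (∀ j k : Fin N, j ≤ k → (l k : ℕ) ≤ (l j : ℕ)) then
          schur N (fun j => (l j : ℕ)) z *
            schur N (fun j => M - N - (l (Fin.rev j) : ℕ)) y
        else 0)
      = ((∏ j : Fin N, ∏ k ∈ Finset.Ioi j, (z j - z k)) *
          (∏ j : Fin N, ∏ k ∈ Finset.Ioi j, (y j - y k)))⁻¹ *
        (if (∀ j k : Fin N, j ≤ k → (l k : ℕ) ≤ (l j : ℕ)) then
            (Matrix.of fun j k : Fin N => z j ^ ((l k : ℕ) + (N - 1 - (k : ℕ)))).det *
              (Matrix.of fun j k : Fin N =>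
                y j ^ ((M - N - (l (Fin.rev k) : ℕ)) + (N - 1 - (k : ℕ)))).det
          else 0) := by
    intro l
    split_ifs with h
    · simp only [schur]
      field_simp
    · rw [mul_zero]
  rw [Finset.sum_congr rfl (fun l _ => hsplit l), ← Finset.mul_sum]
  have hfac : (∏ j : Fin N, ∏ k ∈ Finset.Ioi j, ((z k - z j) * (y j - y k))⁻¹)
      = ((∏ j : Fin N, ∏ k ∈ Finset.Ioi j, (z k - z j)) *
          (∏ j : Fin N, ∏ k ∈ Finset.Ioi j, (y j - y k)))⁻¹ := by
    simp [Finset.prod_inv_distrib, Finset.prod_mul_distrib, mul_inv]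
  rw [hfac]
  have hrev := dc_sign_rev z
  rw [← hrev]
  have hinv : ((Equiv.Perm.sign (Fin.revPerm : Equiv.Perm (Fin N)) : ℤ) : ℂ)⁻¹
      = ((Equiv.Perm.sign (Fin.revPerm : Equiv.Perm (Fin N)) : ℤ) : ℂ) :=
    inv_eq_of_mul_eq_one_right hsign2
  rw [mul_inv, mul_inv, hinv]
  ring
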